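/- Let n > 6 be an integer and let p be a prime with n/2 < p ≤ n - 2. For a positive integer a coprime to p, the product p·a is the order of an element of the alternating group A_{n+1} if and only if a is the order of an element of A_{n+1-p}. -/
import Mathlib

open Equiv Multiset

lemma alt_order_iff (k x : ℕ) :
    (∃ g : alternatingGroup (Fin k), orderOf g = x) ↔
      ∃ m : Multiset ℕ, m.sum ≤ k ∧ (∀ c ∈ m, 2 ≤ c) ∧
        Even (m.sum + Multiset.card m) ∧ m.lcm = x := by
  constructor
  · rintro ⟨g, hg⟩
    refine ⟨(g : Perm (Fin k)).cycleType, ?_, fun c hc => Perm.two_le_of_mem_cycleType hc, ?_, ?_⟩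
    · rw [Perm.sum_cycleType]
      simpa using (Perm.support (g : Perm (Fin k))).card_le_univ
    · have hs : Perm.sign (g : Perm (Fin k)) = 1 := Perm.mem_alternatingGroup.mp g.2
      rw [Perm.sign_of_cycleType] at hs
      rwa [← neg_one_pow_eq_one_iff_even (by decide : (-1 : ℤˣ) ≠ 1)]
    · rw [Perm.lcm_cycleType, orderOf_submonoid, hg]
  · rintro ⟨m, hsum, h2, hev, hlcm⟩
    obtain ⟨σ, hσ⟩ := (Perm.exists_with_cycleType_iff (Fin k)).mpr ⟨by simpa using hsum, h2⟩
    have hs : σ ∈ alternatingGroup (Fin k) := by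
      rw [Perm.mem_alternatingGroup, Perm.sign_of_cycleType, hσ]
      exact Even.neg_one_pow hev
    refine ⟨⟨σ, hs⟩, ?_⟩
    rw [← orderOf_submonoid, ← Perm.lcm_cycleType]
    simp only [hσ, hlcm]

lemma prime_dvd_lcm {p : ℕ} (hp : p.Prime) {m : Multiset ℕ} (h : p ∣ m.lcm) :
    ∃ x ∈ m, p ∣ x := by
  induction m using Multiset.induction_on with
  | empty =>
      rw [Multiset.lcm_zero] at h
      exact absurd (Nat.eq_one_of_dvd_one h) hp.ne_one
  | cons a s ih =>
      rw [Multiset.lcm_cons] at h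
      rcases (Nat.Prime.dvd_mul hp).mp (h.trans (lcm_dvd (dvd_mul_right a s.lcm) (dvd_mul_left s.lcm a))) with h1 | h2
      · exact ⟨a, Multiset.mem_cons_self a s, h1⟩
      · obtain ⟨x, hx, hx'⟩ := ih h2
        exact ⟨x, Multiset.mem_cons_of_mem hx, hx'⟩

theorem stmt_11 (n : ℕ) (hn : 6 < n) (p : ℕ) (hp : p.Prime)
    (hlow : n < 2 * p) (hhigh : p ≤ n - 2)
    (a : ℕ) (ha : 0 < a) (hcop : Nat.Coprime a p) :
    (∃ g : alternatingGroup (Fin (n + 1)), orderOf g = p * a) ↔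
      (∃ g : alternatingGroup (Fin (n + 1 - p)), orderOf g = a) := by
  have hp2 : 2 ≤ p := hp.two_le
  have hpodd : p % 2 = 1 := Nat.odd_iff.mp (hp.odd_of_ne_two (by omega))
  rw [alt_order_iff, alt_order_iff]
  constructor
  · rintro ⟨m, hsum, h2, hev, hlcm⟩
    rw [Nat.even_iff] at hev
    have hpl : p ∣ m.lcm := hlcm ▸ dvd_mul_right p a
    obtain ⟨x, hx, hpx⟩ := prime_dvd_lcm hp hpl
    have hxs : x ≤ m.sum := Multiset.single_le_sum (fun _ _ => Nat.zero_le _) x hx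
    have hx2 := h2 x hx
    by_cases hxp : x = p
    · subst hxp
      have hm : m = x ::ₘ m.erase x := (Multiset.cons_erase hx).symm
      have hsum1 : m.sum = x + (m.erase x).sum := by rw [hm]; simp
      have hcard1 : Multiset.card m = Multiset.card (m.erase x) + 1 := by
        rw [hm]; simp
      have hL : Nat.lcm x (m.erase x).lcm = x * a := by
        rw [hm, Multiset.lcm_cons, lcm_eq_nat_lcm] at hlcm; exact hlcm
      by_cases hdvd : x ∣ (m.erase x).lcm
      · -- second p in the multiset: forces everything else trivial, a = 1
        obtain ⟨y, hy, hpy⟩ := prime_dvd_lcm hp hdvd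
        have hy2 := h2 y (Multiset.mem_of_mem_erase hy)
        have hys : y ≤ (m.erase x).sum :=
          Multiset.single_le_sum (fun _ _ => Nat.zero_le _) y hy
        have hyx : y = x := by
          have := Nat.le_of_dvd (by omega) hpy
          omega
        subst hyx
        have hm2 : m.erase y = y ::ₘ (m.erase y).erase y := (Multiset.cons_erase hy).symm
        have hsum2 : (m.erase y).sum = y + ((m.erase y).erase y).sum := by rw [hm2]; simp
        have hz : ((m.erase y).erase y) = 0 := by
          rw [Multiset.eq_zero_iff_forall_notMem]
          intro z hz
          have hz2 := h2 z (Multiset.mem_of_mem_erase (Multiset.mem_of_mem_erase hz))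
          have : z ≤ ((m.erase y).erase y).sum :=
            Multiset.single_le_sum (fun _ _ => Nat.zero_le _) z hz
          omega
        have hLp : (m.erase y).lcm = y := by
          rw [hm2, hz, Multiset.lcm_cons, Multiset.lcm_zero, lcm_eq_nat_lcm, Nat.lcm_one_right]
        rw [hLp, Nat.lcm_self] at hL
        have ha1 : a = 1 := by
          have := hp.pos
          nlinarith
        exact ⟨0, by simp, by simp, by simp, by simp [ha1]⟩
      · have hLc : Nat.lcm x (m.erase x).lcm = x * (m.erase x).lcm :=
          Nat.Coprime.lcm_eq_mul ((hp.coprime_iff_not_dvd).mpr hdvd)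
        have hLa : (m.erase x).lcm = a :=
          Nat.eq_of_mul_eq_mul_left hp.pos (by rw [← hLc, hL])
        refine ⟨m.erase x, by omega, fun c hc => h2 c (Multiset.mem_of_mem_erase hc), ?_, hLa⟩
        rw [Nat.even_iff]; omega
    · -- x a multiple of p bigger than p: x = 2p, impossible by parity
      exfalso
      obtain ⟨k, rfl⟩ := hpx
      have hk2 : 2 ≤ k := by
        rcases Nat.lt_or_ge k 2 with h | h
        · interval_cases k <;> omega
        · exact h
      have hx2p : p * k = 2 * p ∧ m.sum = 2 * p := by constructor <;> nlinarith
      have hm : m = (p * k) ::ₘ m.erase (p * k) := (Multiset.cons_erase hx).symm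
      have hsum1 : m.sum = p * k + (m.erase (p * k)).sum := by rw [hm]; simp
      have hz : m.erase (p * k) = 0 := by
        rw [Multiset.eq_zero_iff_forall_notMem]
        intro z hz
        have hz2 := h2 z (Multiset.mem_of_mem_erase hz)
        have : z ≤ (m.erase (p * k)).sum :=
          Multiset.single_le_sum (fun _ _ => Nat.zero_le _) z hz
        omega
      have hcard : Multiset.card m = 1 := by rw [hm, hz]; simp
      omega
  · rintro ⟨m, hsum, h2, hev, hlcm⟩
    refine ⟨p ::ₘ m, ?_, ?_, ?_, ?_⟩
    · simp only [Multiset.sum_cons]; omega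
    · intro c hc
      rcases Multiset.mem_cons.mp hc with rfl | hc
      · exact hp2
      · exact h2 c hc
    · rw [Nat.even_iff] at hev ⊢
      simp only [Multiset.sum_cons, Multiset.card_cons]
      omega
    · rw [Multiset.lcm_cons, lcm_eq_nat_lcm, hlcm]
      exact Nat.Coprime.lcm_eq_mul hcop.symm
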